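/- Let z ≥ 1, ε ∈ (0,1), let (a_v)_{v∈V} be nonnegative reals indexed by a finite set V with |V| = n ≥ 1, and let b ≥ 0 satisfy n · (1 + 3z/ε)^{z−1} · (n·b)^z ≤ (ε/3) · Σ_{v∈V} a_v^z (assuming the sum is positive). Then Σ_{v∈V} (a_v + n·b)^z ≤ 2^ε · Σ_{v∈V} a_v^z. -/

import Mathlib

open Real Finset

private lemma pt_ineq (x y lam z : ℝ) (hx : 0 ≤ x) (hy : 0 ≤ y) (hl : 0 < lam)
    (hz : 1 ≤ z) :
    (x + y) ^ z ≤ (1 + lam) ^ (z - 1) * x ^ z + (1 + 1 / lam) ^ (z - 1) * y ^ z := by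
  have h1l : (0:ℝ) < 1 + lam := by linarith
  have hql : (0:ℝ) < (1 + lam) / lam := by positivity
  have hmem1 : (1 + lam) * x ∈ Set.Ici (0:ℝ) := Set.mem_Ici.2 (by positivity)
  have hmem2 : ((1 + lam) / lam) * y ∈ Set.Ici (0:ℝ) := Set.mem_Ici.2 (by positivity)
  have ha : (0:ℝ) ≤ 1 / (1 + lam) := by positivity
  have hb : (0:ℝ) ≤ lam / (1 + lam) := by positivity
  have hab : 1 / (1 + lam) + lam / (1 + lam) = 1 := by field_simp
  have hc := (convexOn_rpow hz).2 hmem1 hmem2 ha hb hab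
  simp only [smul_eq_mul] at hc
  have harg : 1 / (1 + lam) * ((1 + lam) * x) + lam / (1 + lam) * ((1 + lam) / lam * y)
      = x + y := by field_simp
  rw [harg] at hc
  refine hc.trans (le_of_eq ?_)
  rw [Real.mul_rpow h1l.le hx, Real.mul_rpow hql.le hy]
  have e1 : 1 / (1 + lam) * ((1 + lam) ^ z * x ^ z) = (1 + lam) ^ (z - 1) * x ^ z := by
    rw [Real.rpow_sub h1l, Real.rpow_one]; ring
  have e2 : lam / (1 + lam) * (((1 + lam) / lam) ^ z * y ^ z)
      = (1 + 1 / lam) ^ (z - 1) * y ^ z := by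
    have h : (1 : ℝ) + 1 / lam = (1 + lam) / lam := by field_simp; ring
    rw [h, Real.rpow_sub hql, Real.rpow_one]
    field_simp
    all_goals ring
  rw [e1, e2]

private lemma scalar_ineq (ε : ℝ) (hε0 : 0 < ε) (hε1 : ε < 1) :
    Real.exp (ε / 3) + ε / 3 ≤ (2 : ℝ) ^ ε := by
  have hx0 : (0:ℝ) ≤ ε / 3 := by positivity
  have hx1 : ε / 3 ≤ 1 := by linarith
  have hub : Real.exp (ε / 3) ≤ 1 + ε / 3 + (ε / 3) ^ 2 * 3 / 4 := by
    have := Real.exp_bound' hx0 hx1 (n := 2) (by norm_num)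
    norm_num [Finset.sum_range_succ] at this
    linarith
  have hlog : (2:ℝ) ^ ε = Real.exp (Real.log 2 * ε) := by
    rw [Real.exp_mul, Real.exp_log (by norm_num : (0:ℝ) < 2)]
  have hlb : 1 + Real.log 2 * ε + (Real.log 2 * ε) ^ 2 / 2 ≤ (2:ℝ) ^ ε := by
    rw [hlog]
    exact Real.quadratic_le_exp_of_nonneg (by positivity)
  have hl2 : (0.6931471803 : ℝ) < Real.log 2 := Real.log_two_gt_d9
  have key1 : ε / 3 + ε / 3 ≤ Real.log 2 * ε := by
    nlinarith [mul_nonneg (show (0:ℝ) ≤ Real.log 2 - 2/3 by linarith) hε0.le]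
  have key2 : (ε / 3) ^ 2 * 3 / 4 ≤ (Real.log 2 * ε) ^ 2 / 2 := by
    nlinarith [mul_nonneg (sq_nonneg ε) (show (0:ℝ) ≤ Real.log 2 ^ 2 / 2 - 1 / 12 by nlinarith)]
  linarith

/-- Perturbation bound: if the uniform additive distortion `n·b` is small enough
relative to the cost `Σ a_v^z`, then perturbing every distance by `n·b` changes
the cost by at most a factor `2^ε`. -/
theorem weight_perturbation {α : Type*} (V : Finset α) (n : ℕ)
    (hn : V.card = n) (h1 : 1 ≤ n)
    (z ε : ℝ) (hz : 1 ≤ z) (hε0 : 0 < ε) (hε1 : ε < 1)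
    (a : α → ℝ) (ha : ∀ v ∈ V, 0 ≤ a v) (b : ℝ) (hb : 0 ≤ b)
    (hsum : 0 < ∑ v ∈ V, a v ^ z)
    (hsmall : (n : ℝ) * (1 + 3 * z / ε) ^ (z - 1) * ((n : ℝ) * b) ^ z ≤
      (ε / 3) * ∑ v ∈ V, a v ^ z) :
    ∑ v ∈ V, (a v + (n : ℝ) * b) ^ z ≤ (2 : ℝ) ^ ε * ∑ v ∈ V, a v ^ z := by
  have hz0 : (0:ℝ) < z := by linarith
  set lam : ℝ := ε / (3 * z) with hlam
  have hl : 0 < lam := by positivity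
  set B : ℝ := (n : ℝ) * b with hB
  have hB0 : 0 ≤ B := by positivity
  have hinv : 1 + 1 / lam = 1 + 3 * z / ε := by
    rw [hlam, one_div, inv_div]
  set S : ℝ := ∑ v ∈ V, a v ^ z with hS
  have step1 : ∑ v ∈ V, (a v + B) ^ z ≤
      (1 + lam) ^ (z - 1) * S + (n : ℝ) * ((1 + 3 * z / ε) ^ (z - 1) * B ^ z) := by
    calc ∑ v ∈ V, (a v + B) ^ z
        ≤ ∑ v ∈ V, ((1 + lam) ^ (z - 1) * a v ^ z + (1 + 1 / lam) ^ (z - 1) * B ^ z) :=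
          Finset.sum_le_sum fun v hv => pt_ineq (a v) B lam z (ha v hv) hB0 hl hz
      _ = (1 + lam) ^ (z - 1) * S + (V.card : ℝ) * ((1 + 1 / lam) ^ (z - 1) * B ^ z) := by
          rw [Finset.sum_add_distrib, ← Finset.mul_sum, Finset.sum_const, nsmul_eq_mul, hS]
      _ = (1 + lam) ^ (z - 1) * S + (n : ℝ) * ((1 + 3 * z / ε) ^ (z - 1) * B ^ z) := by
          rw [hn, hinv]
  have step2 : (1 + lam) ^ (z - 1) ≤ Real.exp (ε / 3) := by
    have h1 : (1 + lam) ^ (z - 1) ≤ (Real.exp lam) ^ (z - 1) :=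
      Real.rpow_le_rpow (by linarith) (by linarith [Real.add_one_le_exp lam]) (by linarith)
    have h2 : (Real.exp lam) ^ (z - 1) = Real.exp (lam * (z - 1)) := (Real.exp_mul _ _).symm
    have h3 : lam * (z - 1) ≤ ε / 3 := by
      have : lam * z = ε / 3 := by
        rw [hlam]; field_simp
      nlinarith
    calc (1 + lam) ^ (z - 1) ≤ Real.exp (lam * (z - 1)) := h2 ▸ h1
      _ ≤ Real.exp (ε / 3) := Real.exp_le_exp.2 h3
  have hsmall' : (n : ℝ) * ((1 + 3 * z / ε) ^ (z - 1) * B ^ z) ≤ (ε / 3) * S := by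
    rw [← mul_assoc]; exact hsmall
  have final : Real.exp (ε / 3) + ε / 3 ≤ (2:ℝ) ^ ε := scalar_ineq ε hε0 hε1
  calc ∑ v ∈ V, (a v + B) ^ z
      ≤ (1 + lam) ^ (z - 1) * S + (n : ℝ) * ((1 + 3 * z / ε) ^ (z - 1) * B ^ z) := step1
    _ ≤ Real.exp (ε / 3) * S + (ε / 3) * S := by
        gcongr
    _ = (Real.exp (ε / 3) + ε / 3) * S := by ring
    _ ≤ (2:ℝ) ^ ε * S := mul_le_mul_of_nonneg_right final hsum.le
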